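/- Let a ≤ b be positive reals with Q = b/a, and let q_1,…,q_n ∈ [a,b] with partial sums F_k. Then ∑_{ℓ=1}^{n} q_ℓ/F_ℓ ≤ min{n, 1 + log(Q·n)}. -/

import Mathlib

theorem sum_ratio_le_min (n : ℕ) (hn : 1 ≤ n) (a b : ℝ)
    (ha : 0 < a) (hab : a ≤ b) (hb : b ≤ 1) (Q : ℝ) (hQ : Q = b / a)
    (q : ℕ → ℝ) (hq : ∀ i ∈ Finset.Icc 1 n, q i ∈ Set.Icc a b)
    (F : ℕ → ℝ) (hF : ∀ k, F k = ∑ i ∈ Finset.Icc 1 k, q i) :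
    ∑ ℓ ∈ Finset.Icc 1 n, q ℓ / F ℓ ≤ min (n : ℝ) (1 + Real.log (Q * n)) := by
  have hqa : ∀ i, 1 ≤ i → i ≤ n → a ≤ q i := fun i h1 h2 =>
    (hq i (Finset.mem_Icc.mpr ⟨h1, h2⟩)).1
  have hqb : ∀ i, 1 ≤ i → i ≤ n → q i ≤ b := fun i h1 h2 =>
    (hq i (Finset.mem_Icc.mpr ⟨h1, h2⟩)).2
  have hFpos : ∀ k, 1 ≤ k → k ≤ n → 0 < F k := by
    intro k hk1 hkn
    rw [hF]
    apply Finset.sum_pos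
    · intro i hi
      obtain ⟨h1, h2⟩ := Finset.mem_Icc.mp hi
      exact lt_of_lt_of_le ha (hqa i h1 (le_trans h2 hkn))
    · exact Finset.nonempty_Icc.mpr hk1
  have hsum_le_n : ∑ ℓ ∈ Finset.Icc 1 n, q ℓ / F ℓ ≤ (n : ℝ) := by
    calc ∑ ℓ ∈ Finset.Icc 1 n, q ℓ / F ℓ ≤ ∑ ℓ ∈ Finset.Icc 1 n, (1 : ℝ) := by
          apply Finset.sum_le_sum
          intro i hi
          obtain ⟨hi1, hin⟩ := Finset.mem_Icc.mp hi
          have hFi := hFpos i hi1 hin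
          have hqF : q i ≤ F i := by
            rw [hF]
            apply Finset.single_le_sum (f := q) _ (Finset.mem_Icc.mpr ⟨hi1, le_refl i⟩)
            intro j hj
            obtain ⟨hj1, hj2⟩ := Finset.mem_Icc.mp hj
            exact le_of_lt (lt_of_lt_of_le ha (hqa j hj1 (le_trans hj2 hin)))
          exact (div_le_one hFi).mpr hqF
      _ = (n : ℝ) := by
          rw [Finset.sum_const, Nat.card_Icc]
          simp
  have haux : ∀ m, 1 ≤ m → m ≤ n →
      ∑ ℓ ∈ Finset.Icc 1 m, q ℓ / F ℓ ≤ 1 + Real.log (F m) - Real.log (F 1) := by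
    intro m hm
    induction m, hm using Nat.le_induction with
    | base =>
      intro _
      have hF1 : F 1 = q 1 := by rw [hF]; simp
      have hq1 : 0 < q 1 := lt_of_lt_of_le ha (hqa 1 le_rfl hn)
      rw [Finset.Icc_self, Finset.sum_singleton, hF1, div_self (ne_of_gt hq1)]
      simp
    | succ m hm ih =>
      intro hmn
      have hmn' : m ≤ n := le_trans (Nat.le_succ m) hmn
      have h1 := ih hmn'
      rw [Finset.sum_Icc_succ_top (by omega : 1 ≤ m + 1)]
      have hFm : 0 < F m := hFpos m hm hmn'
      have hFm1 : 0 < F (m + 1) := hFpos (m + 1) (by omega) hmn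
      have hFrec : F (m + 1) = F m + q (m + 1) := by
        rw [hF, hF, Finset.sum_Icc_succ_top (by omega : 1 ≤ m + 1)]
      have hstep : q (m + 1) / F (m + 1) ≤ Real.log (F (m + 1)) - Real.log (F m) := by
        have hlog : Real.log (F m / F (m + 1)) ≤ F m / F (m + 1) - 1 :=
          Real.log_le_sub_one_of_pos (by positivity)
        rw [Real.log_div (ne_of_gt hFm) (ne_of_gt hFm1)] at hlog
        have hkey : q (m + 1) / F (m + 1) = 1 - F m / F (m + 1) := by
          field_simp
          linarith [hFrec]
        rw [hkey]; linarith
      linarith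
  have hFn_le : F n ≤ (n : ℝ) * b := by
    rw [hF]
    calc ∑ i ∈ Finset.Icc 1 n, q i ≤ ∑ i ∈ Finset.Icc 1 n, b := by
          apply Finset.sum_le_sum
          intro i hi
          obtain ⟨h1, h2⟩ := Finset.mem_Icc.mp hi
          exact hqb i h1 h2
      _ = (n : ℝ) * b := by
          rw [Finset.sum_const, Nat.card_Icc, nsmul_eq_mul]
          simp
  have hF1_ge : a ≤ F 1 := by
    have : F 1 = q 1 := by rw [hF]; simp
    rw [this]; exact hqa 1 le_rfl hn
  have hF1pos : 0 < F 1 := hFpos 1 le_rfl hn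
  have hFnpos : 0 < F n := hFpos n hn le_rfl
  have hlogle : Real.log (F n) - Real.log (F 1) ≤ Real.log (Q * n) := by
    rw [← Real.log_div (ne_of_gt hFnpos) (ne_of_gt hF1pos)]
    apply Real.log_le_log (div_pos hFnpos hF1pos)
    rw [hQ]
    have hnb : (0 : ℝ) ≤ (n : ℝ) * b := mul_nonneg (Nat.cast_nonneg n) (le_of_lt (lt_of_lt_of_le ha hab))
    calc F n / F 1 ≤ ((n : ℝ) * b) / a := div_le_div₀ hnb hFn_le ha hF1_ge
      _ = b / a * n := by ring
  refine le_min hsum_le_n ?_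
  linarith [haux n hn le_rfl, hlogle]
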